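/- Under the hypotheses of the minimax theorem (finite 𝒳, 𝒴, closed convex 𝒟 ⊆ 𝒫(𝒳×𝒴), h* := max_{p∈𝒟} H_p(Y|X)), the set ∩_{p∈𝒟} {q ∈ 𝒫(𝒴|𝒳) : E_p[−log q(Y|X)] ≤ h*} is nonempty, i.e., there exists a single decision rule q achieving loss at most h* simultaneously against every distribution in 𝒟. -/

import Mathlib

open scoped BigOperators

variable {𝒳 𝒴 : Type*}

/-- `p` is a probability distribution on `𝒳 × 𝒴`. -/
def IsDist [Fintype 𝒳] [Fintype 𝒴] (p : 𝒳 × 𝒴 → ℝ) : Prop :=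
  (∀ a, 0 ≤ p a) ∧ ∑ a, p a = 1

/-- `q` is a conditional distribution (stochastic matrix) from `𝒳` to `𝒴`. -/
def IsCond [Fintype 𝒴] (q : 𝒳 → 𝒴 → ℝ) : Prop :=
  (∀ x y, 0 ≤ q x y) ∧ ∀ x, ∑ y, q x y = 1

/-- Marginal of `X`. -/
noncomputable def margX [Fintype 𝒴] (p : 𝒳 × 𝒴 → ℝ) (x : 𝒳) : ℝ := ∑ y, p (x, y)

/-- Conditional entropy `H_p(Y|X)` (natural log, `0 log 0 = 0`). -/
noncomputable def condEnt [Fintype 𝒳] [Fintype 𝒴] (p : 𝒳 × 𝒴 → ℝ) : ℝ :=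
  -∑ a, p a * Real.log (p a / margX p a.1)

/-- Expected cross-entropy loss `E_p[-log q(Y|X)]`, valued in `EReal` with value `⊤`
when `q(y|x) = 0` while `p(x,y) > 0`. -/
noncomputable def CEE [Fintype 𝒳] [Fintype 𝒴] (p : 𝒳 × 𝒴 → ℝ) (q : 𝒳 → 𝒴 → ℝ) : EReal :=
  ∑ a, if q a.1 a.2 = 0 ∧ 0 < p a then (⊤ : EReal)
       else ((p a * (-Real.log (q a.1 a.2)) : ℝ) : EReal)

set_option linter.unusedSectionVars false

namespace RobustAux

open Filter Real Topology

section Aux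

variable [Fintype 𝒳] [Fintype 𝒴]

/-- real-valued expected log-loss with general weight `w` -/
noncomputable def lossR (w : 𝒳 × 𝒴 → ℝ) (q : 𝒳 → 𝒴 → ℝ) : ℝ :=
  ∑ a : 𝒳 × 𝒴, w a * (-Real.log (q a.1 a.2))

/-- conditionals with entries bounded below by `ε / |𝒴|` -/
def Qset (𝒳 𝒴 : Type*) [Fintype 𝒳] [Fintype 𝒴] (ε : ℝ) : Set (𝒳 → 𝒴 → ℝ) :=
  {q | IsCond q ∧ ∀ x y, ε / (Fintype.card 𝒴 : ℝ) ≤ q x y}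

/-- the conditional distribution of `p`, with uniform fallback -/
noncomputable def condOf (p : 𝒳 × 𝒴 → ℝ) : 𝒳 → 𝒴 → ℝ := fun x y =>
  if margX p x = 0 then 1 / (Fintype.card 𝒴 : ℝ) else p (x, y) / margX p x

/-- smoothed weight -/
noncomputable def wt (ε : ℝ) (p : 𝒳 × 𝒴 → ℝ) : 𝒳 × 𝒴 → ℝ := fun a =>
  (1 - ε) * p a + ε * (1 / (Fintype.card (𝒳 × 𝒴) : ℝ))

lemma isCond_le_one {q : 𝒳 → 𝒴 → ℝ} (hq : IsCond q) (x : 𝒳) (y : 𝒴) : q x y ≤ 1 := by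
  have := Finset.single_le_sum (f := fun y => q x y) (fun i _ => hq.1 x i)
    (Finset.mem_univ y)
  simpa [hq.2 x] using this

lemma neg_log_nonneg {q : 𝒳 → 𝒴 → ℝ} (hq : IsCond q) (x : 𝒳) (y : 𝒴) :
    0 ≤ -Real.log (q x y) := by
  simpa using Real.log_nonpos (hq.1 x y) (isCond_le_one hq x y)

lemma lossR_nonneg {p : 𝒳 × 𝒴 → ℝ} {q : 𝒳 → 𝒴 → ℝ} (hp : ∀ a, 0 ≤ p a)
    (hq : IsCond q) : 0 ≤ lossR p q :=
  Finset.sum_nonneg fun a _ => mul_nonneg (hp a) (neg_log_nonneg hq a.1 a.2)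

lemma lossR_comb (c₁ c₂ : ℝ) (w₁ w₂ : 𝒳 × 𝒴 → ℝ) (q : 𝒳 → 𝒴 → ℝ) :
    lossR (fun a => c₁ * w₁ a + c₂ * w₂ a) q = c₁ * lossR w₁ q + c₂ * lossR w₂ q := by
  simp [lossR, add_mul, mul_assoc, Finset.sum_add_distrib, Finset.mul_sum]
  ring

lemma margX_nonneg {p : 𝒳 × 𝒴 → ℝ} (hp : ∀ a, 0 ≤ p a) (x : 𝒳) : 0 ≤ margX p x :=
  Finset.sum_nonneg fun y _ => hp (x, y)

lemma le_margX {p : 𝒳 × 𝒴 → ℝ} (hp : ∀ a, 0 ≤ p a) (a : 𝒳 × 𝒴) : p a ≤ margX p a.1 := by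
  have := Finset.single_le_sum (f := fun y => p (a.1, y)) (fun i _ => hp (a.1, i))
    (Finset.mem_univ a.2)
  simpa [margX] using this

lemma eval_continuous (x : 𝒳) (y : 𝒴) : Continuous (fun q : 𝒳 → 𝒴 → ℝ => q x y) :=
  (continuous_apply y).comp (continuous_apply x)

lemma isClosed_Qset (ε : ℝ) : IsClosed (Qset 𝒳 𝒴 ε) := by
  have h1 : IsClosed {q : 𝒳 → 𝒴 → ℝ | ∀ x y, 0 ≤ q x y} := by
    simp only [Set.setOf_forall]
    exact isClosed_iInter fun x => isClosed_iInter fun y =>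
      isClosed_le continuous_const (eval_continuous x y)
  have h2 : IsClosed {q : 𝒳 → 𝒴 → ℝ | ∀ x, ∑ y, q x y = 1} := by
    simp only [Set.setOf_forall]
    exact isClosed_iInter fun x =>
      isClosed_eq (continuous_finset_sum _ fun y _ => eval_continuous x y) continuous_const
  have h3 : IsClosed {q : 𝒳 → 𝒴 → ℝ | ∀ x y, ε / (Fintype.card 𝒴 : ℝ) ≤ q x y} := by
    simp only [Set.setOf_forall]
    exact isClosed_iInter fun x => isClosed_iInter fun y =>
      isClosed_le continuous_const (eval_continuous x y)
  have : Qset 𝒳 𝒴 ε = ({q : 𝒳 → 𝒴 → ℝ | ∀ x y, 0 ≤ q x y} ∩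
      {q | ∀ x, ∑ y, q x y = 1}) ∩ {q | ∀ x y, ε / (Fintype.card 𝒴 : ℝ) ≤ q x y} := by
    ext q; constructor
    · rintro ⟨⟨a, b⟩, c⟩; exact ⟨⟨a, b⟩, c⟩
    · rintro ⟨⟨a, b⟩, c⟩; exact ⟨⟨a, b⟩, c⟩
  rw [this]; exact ((h1.inter h2).inter h3)

lemma isCompact_Qset (ε : ℝ) : IsCompact (Qset 𝒳 𝒴 ε) := by
  refine IsCompact.of_isClosed_subset
    (isCompact_univ_pi fun _ : 𝒳 => isCompact_univ_pi fun _ : 𝒴 => isCompact_Icc (a := (0:ℝ)) (b := 1))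
    (isClosed_Qset ε) ?_
  intro q hq
  refine Set.mem_univ_pi.2 fun x => Set.mem_univ_pi.2 fun y => ?_
  exact ⟨hq.1.1 x y, isCond_le_one hq.1 x y⟩

lemma uniform_mem_Qset [Nonempty 𝒴] {ε : ℝ} (hε1 : ε ≤ 1) :
    (fun (_ : 𝒳) (_ : 𝒴) => 1 / (Fintype.card 𝒴 : ℝ)) ∈ Qset 𝒳 𝒴 ε := by
  have hN : (0:ℝ) < Fintype.card 𝒴 := by
    exact_mod_cast Fintype.card_pos
  exact ⟨⟨fun x y => by positivity, fun x => by rw [Finset.sum_const, Finset.card_univ, nsmul_eq_mul]; field_simp⟩,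
    fun x y => (div_le_div_iff_of_pos_right hN).2 hε1⟩

lemma lossR_tendsto {w : 𝒳 × 𝒴 → ℝ} {qn : ℕ → 𝒳 → 𝒴 → ℝ} {q : 𝒳 → 𝒴 → ℝ}
    (hq : ∀ a : 𝒳 × 𝒴, Tendsto (fun n => qn n a.1 a.2) atTop (𝓝 (q a.1 a.2)))
    (hpos : ∀ a : 𝒳 × 𝒴, w a ≠ 0 → 0 < q a.1 a.2) :
    Tendsto (fun n => lossR w (qn n)) atTop (𝓝 (lossR w q)) := by
  unfold lossR
  refine tendsto_finset_sum _ fun a _ => ?_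
  rcases eq_or_ne (w a) 0 with h | h
  · simpa [h] using (tendsto_const_nhds : Tendsto (fun _ : ℕ => (0:ℝ)) atTop (𝓝 0))
  · exact tendsto_const_nhds.mul
      (((Real.continuousAt_log (hpos a h).ne').tendsto.comp (hq a)).neg)

lemma isCond_condOf [Nonempty 𝒴] {p : 𝒳 × 𝒴 → ℝ} (hp : ∀ a, 0 ≤ p a) :
    IsCond (condOf p) := by
  have hN : (0:ℝ) < Fintype.card 𝒴 := by exact_mod_cast Fintype.card_pos
  constructor
  · intro x y
    unfold condOf
    split_ifs with h
    · positivity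
    · exact div_nonneg (hp (x, y)) (margX_nonneg hp x)
  · intro x
    unfold condOf
    split_ifs with h
    · rw [Finset.sum_const, Finset.card_univ, nsmul_eq_mul]; field_simp
    · rw [← Finset.sum_div]
      rw [show (∑ y, p (x, y)) = margX p x from rfl, div_self h]

lemma condEnt_eq_sum {p : 𝒳 × 𝒴 → ℝ} (hp : ∀ a, 0 ≤ p a) :
    condEnt p = ∑ a, Real.negMulLog (p a) - ∑ x, Real.negMulLog (margX p x) := by
  have key : ∀ a : 𝒳 × 𝒴, p a * Real.log (p a / margX p a.1)
      = -(Real.negMulLog (p a)) - p a * Real.log (margX p a.1) := by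
    intro a
    rcases eq_or_lt_of_le (hp a) with h0 | hpos
    · simp [← h0]
    · have hm : 0 < margX p a.1 := lt_of_lt_of_le hpos (le_margX hp a)
      rw [Real.log_div hpos.ne' hm.ne', Real.negMulLog]
      ring
  have h2 : ∑ a : 𝒳 × 𝒴, p a * Real.log (margX p a.1)
      = -∑ x, Real.negMulLog (margX p x) := by
    rw [Fintype.sum_prod_type]
    rw [← Finset.sum_neg_distrib]
    refine Finset.sum_congr rfl fun x _ => ?_
    simp only []
    rw [show (fun y => p (x, y) * Real.log (margX p (x, y).1))
        = fun y => p (x, y) * Real.log (margX p x) from rfl, ← Finset.sum_mul,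
      show (∑ y, p (x, y)) = margX p x from rfl, Real.negMulLog]
    ring
  unfold condEnt
  simp only [key]
  rw [Finset.sum_sub_distrib, h2, Finset.sum_neg_distrib]
  ring
lemma isCompact_dist {𝒟 : Set (𝒳 × 𝒴 → ℝ)} (h𝒟 : ∀ p ∈ 𝒟, IsDist p)
    (hclosed : IsClosed 𝒟) : IsCompact 𝒟 := by
  refine IsCompact.of_isClosed_subset
    (isCompact_univ_pi fun _ : 𝒳 × 𝒴 => isCompact_Icc (a := (0:ℝ)) (b := 1))
    hclosed ?_
  intro p hp
  refine Set.mem_univ_pi.2 fun a => ?_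
  refine ⟨(h𝒟 p hp).1 a, ?_⟩
  have := Finset.single_le_sum (f := p) (fun i _ => (h𝒟 p hp).1 i) (Finset.mem_univ a)
  simpa [(h𝒟 p hp).2] using this

lemma exists_max_condEnt {𝒟 : Set (𝒳 × 𝒴 → ℝ)} (h𝒟 : ∀ p ∈ 𝒟, IsDist p)
    (hclosed : IsClosed 𝒟) (hne : 𝒟.Nonempty) :
    ∃ ps ∈ 𝒟, ∀ p ∈ 𝒟, condEnt p ≤ condEnt ps := by
  have hcont : ContinuousOn condEnt 𝒟 := by
    have hc : Continuous (fun p : 𝒳 × 𝒴 → ℝ =>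
        ∑ a, Real.negMulLog (p a) - ∑ x, Real.negMulLog (margX p x)) := by
      refine Continuous.sub ?_ ?_
      · exact continuous_finset_sum _ fun a _ => Real.continuous_negMulLog.comp (continuous_apply a)
      · exact continuous_finset_sum _ fun x _ => Real.continuous_negMulLog.comp
          (continuous_finset_sum _ fun y _ => continuous_apply (x, y))
    exact ContinuousOn.congr hc.continuousOn fun p hp => condEnt_eq_sum (h𝒟 p hp).1
  obtain ⟨ps, hps, hmax⟩ := (isCompact_dist h𝒟 hclosed).exists_isMaxOn hne hcont
  exact ⟨ps, hps, fun p hp => hmax hp⟩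

lemma CEE_eq_coe {p : 𝒳 × 𝒴 → ℝ} {q : 𝒳 → 𝒴 → ℝ} (hp : ∀ a, 0 ≤ p a)
    (hq : ∀ a : 𝒳 × 𝒴, 0 < p a → q a.1 a.2 ≠ 0) :
    CEE p q = ((lossR p q : ℝ) : EReal) := by
  unfold CEE lossR
  have coeSum : ∀ (f : 𝒳 × 𝒴 → ℝ),
      ((∑ a, f a : ℝ) : EReal) = ∑ a, ((f a : ℝ) : EReal) := by
    intro f
    classical
    induction (Finset.univ : Finset (𝒳 × 𝒴)) using Finset.induction with
    | empty => simp
    | insert _ _ h ih => rw [Finset.sum_insert h, Finset.sum_insert h, EReal.coe_add, ih]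
  rw [coeSum]
  refine Finset.sum_congr rfl fun a _ => ?_
  rw [if_neg]
  rintro ⟨h0, hpos⟩
  exact hq a hpos h0
lemma min_unique [Nonempty 𝒴] {ε : ℝ} (hε : 0 < ε) {w : 𝒳 × 𝒴 → ℝ} (hw : ∀ a, 0 < w a)
    {q₁ q₂ : 𝒳 → 𝒴 → ℝ} (h₁ : q₁ ∈ Qset 𝒳 𝒴 ε) (h₂ : q₂ ∈ Qset 𝒳 𝒴 ε)
    (hm₁ : ∀ q ∈ Qset 𝒳 𝒴 ε, lossR w q₁ ≤ lossR w q)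
    (hm₂ : ∀ q ∈ Qset 𝒳 𝒴 ε, lossR w q₂ ≤ lossR w q) : q₁ = q₂ := by
  have hN : (0:ℝ) < Fintype.card 𝒴 := by exact_mod_cast Fintype.card_pos
  have hεN : (0:ℝ) < ε / Fintype.card 𝒴 := by positivity
  have hpos₁ : ∀ x y, 0 < q₁ x y := fun x y => lt_of_lt_of_le hεN (h₁.2 x y)
  have hpos₂ : ∀ x y, 0 < q₂ x y := fun x y => lt_of_lt_of_le hεN (h₂.2 x y)
  by_contra hne
  have hxy : ∃ x y, q₁ x y ≠ q₂ x y := by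
    by_contra hc
    push_neg at hc
    exact hne (funext fun x => funext fun y => hc x y)
  obtain ⟨x₀, y₀, hxy⟩ := hxy
  set mid : 𝒳 → 𝒴 → ℝ := fun x y => (q₁ x y + q₂ x y) / 2 with hmid
  have hmidQ : mid ∈ Qset 𝒳 𝒴 ε := by
    refine ⟨⟨fun x y => div_nonneg (add_nonneg (hpos₁ x y).le (hpos₂ x y).le) (by norm_num), fun x => ?_⟩, fun x y => ?_⟩
    · simp only [hmid, ← Finset.sum_div, Finset.sum_add_distrib, h₁.1.2 x, h₂.1.2 x]
      norm_num
    · have := h₁.2 x y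
      have := h₂.2 x y
      simp only [hmid]
      linarith
  -- pointwise concavity bounds
  have hconc : ∀ a : 𝒳 × 𝒴, w a * (-Real.log (mid a.1 a.2)) ≤
      w a * (-Real.log (q₁ a.1 a.2)) / 2 + w a * (-Real.log (q₂ a.1 a.2)) / 2 := by
    intro a
    have hc := strictConcaveOn_log_Ioi.concaveOn.2 (Set.mem_Ioi.2 (hpos₁ a.1 a.2))
      (Set.mem_Ioi.2 (hpos₂ a.1 a.2)) (by norm_num : (0:ℝ) ≤ 1/2)
      (by norm_num : (0:ℝ) ≤ 1/2) (by norm_num)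
    simp only [smul_eq_mul] at hc
    have hmeq : mid a.1 a.2 = 1/2 * q₁ a.1 a.2 + 1/2 * q₂ a.1 a.2 := by
      simp only [hmid]; ring
    rw [hmeq]
    nlinarith [(hw a).le, hc]
  have hstrict : w (x₀, y₀) * (-Real.log (mid x₀ y₀)) <
      w (x₀, y₀) * (-Real.log (q₁ x₀ y₀)) / 2 + w (x₀, y₀) * (-Real.log (q₂ x₀ y₀)) / 2 := by
    have hc := strictConcaveOn_log_Ioi.2 (Set.mem_Ioi.2 (hpos₁ x₀ y₀))
      (Set.mem_Ioi.2 (hpos₂ x₀ y₀)) hxy (by norm_num : (0:ℝ) < 1/2)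
      (by norm_num : (0:ℝ) < 1/2) (by norm_num)
    simp only [smul_eq_mul] at hc
    have hmeq : mid x₀ y₀ = 1/2 * q₁ x₀ y₀ + 1/2 * q₂ x₀ y₀ := by
      simp only [hmid]; ring
    rw [hmeq]
    nlinarith [hw (x₀, y₀), hc]
  have hlt : lossR w mid < lossR w q₁ := by
    have heq : lossR w q₁ = lossR w q₂ := le_antisymm (hm₁ q₂ h₂) (hm₂ q₁ h₁)
    have hsum : lossR w mid < ∑ a : 𝒳 × 𝒴, (w a * (-Real.log (q₁ a.1 a.2)) / 2
        + w a * (-Real.log (q₂ a.1 a.2)) / 2) := by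
      refine Finset.sum_lt_sum (fun a _ => hconc a) ⟨(x₀, y₀), Finset.mem_univ _, hstrict⟩
    have hsplit : ∑ a : 𝒳 × 𝒴, (w a * (-Real.log (q₁ a.1 a.2)) / 2
        + w a * (-Real.log (q₂ a.1 a.2)) / 2) = lossR w q₁ / 2 + lossR w q₂ / 2 := by
      rw [Finset.sum_add_distrib, ← Finset.sum_div, ← Finset.sum_div]
      rfl
    rw [hsplit, ← heq] at hsum
    linarith
  exact absurd (hm₁ mid hmidQ) (not_le.2 hlt)

lemma gibbs_bound [Nonempty 𝒴] {ε : ℝ} (hε : 0 < ε) (hε1 : ε < 1) {p : 𝒳 × 𝒴 → ℝ}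
    (hp : IsDist p) :
    lossR p (fun x y => (1 - ε) * condOf p x y + ε * (1 / (Fintype.card 𝒴 : ℝ)))
      ≤ condEnt p + Real.log (1 / (1 - ε)) := by
  have hN : (0:ℝ) < Fintype.card 𝒴 := by exact_mod_cast Fintype.card_pos
  have hterm : ∀ a : 𝒳 × 𝒴,
      p a * (-Real.log ((1 - ε) * condOf p a.1 a.2 + ε * (1 / (Fintype.card 𝒴 : ℝ))))
        ≤ p a * (-Real.log (p a / margX p a.1)) + p a * Real.log (1 / (1 - ε)) := by
    intro a
    rcases eq_or_lt_of_le (hp.1 a) with h0 | hpos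
    · simp [← h0]
    · have hm : 0 < margX p a.1 := lt_of_lt_of_le hpos (le_margX hp.1 a)
      have hcond : condOf p a.1 a.2 = p a / margX p a.1 := by
        unfold condOf
        rw [if_neg hm.ne']
      have hr : 0 < p a / margX p a.1 := div_pos hpos hm
      have hql : (1 - ε) * (p a / margX p a.1)
          ≤ (1 - ε) * condOf p a.1 a.2 + ε * (1 / (Fintype.card 𝒴 : ℝ)) := by
        rw [hcond]
        have : 0 ≤ ε * (1 / (Fintype.card 𝒴 : ℝ)) := by positivity
        linarith
      have hlog : Real.log ((1 - ε) * (p a / margX p a.1))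
          ≤ Real.log ((1 - ε) * condOf p a.1 a.2 + ε * (1 / (Fintype.card 𝒴 : ℝ))) :=
        Real.log_le_log (mul_pos (by linarith) hr) hql
      have hsplit : Real.log ((1 - ε) * (p a / margX p a.1))
          = Real.log (1 - ε) + Real.log (p a / margX p a.1) :=
        Real.log_mul (by linarith) hr.ne'
      have h1d : Real.log (1 / (1 - ε)) = -Real.log (1 - ε) := by
        rw [one_div, Real.log_inv]
      nlinarith [hpos, hlog, hsplit]
  calc lossR p (fun x y => (1 - ε) * condOf p x y + ε * (1 / (Fintype.card 𝒴 : ℝ)))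
      ≤ ∑ a : 𝒳 × 𝒴, (p a * (-Real.log (p a / margX p a.1)) + p a * Real.log (1 / (1 - ε))) :=
        Finset.sum_le_sum fun a _ => hterm a
    _ = condEnt p + Real.log (1 / (1 - ε)) := by
        rw [Finset.sum_add_distrib, ← Finset.sum_mul, hp.2, one_mul]
        unfold condEnt
        rw [← Finset.sum_neg_distrib]
        simp [mul_neg]

lemma lossR_unif_le [Nonempty 𝒳] [Nonempty 𝒴] {ε : ℝ} (hε : 0 < ε) {q : 𝒳 → 𝒴 → ℝ}
    (hq : q ∈ Qset 𝒳 𝒴 ε) :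
    lossR (fun _ => 1 / (Fintype.card (𝒳 × 𝒴) : ℝ)) q
      ≤ Real.log ((Fintype.card 𝒴 : ℝ) / ε) := by
  have hN : (0:ℝ) < Fintype.card 𝒴 := by exact_mod_cast Fintype.card_pos
  have hV : (0:ℝ) < Fintype.card (𝒳 × 𝒴) := by exact_mod_cast Fintype.card_pos
  have hterm : ∀ a : 𝒳 × 𝒴, -Real.log (q a.1 a.2) ≤ Real.log ((Fintype.card 𝒴 : ℝ) / ε) := by
    intro a
    have h1 : Real.log (ε / (Fintype.card 𝒴 : ℝ)) ≤ Real.log (q a.1 a.2) :=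
      Real.log_le_log (by positivity) (hq.2 a.1 a.2)
    have h2 : Real.log ((Fintype.card 𝒴 : ℝ) / ε) = -Real.log (ε / (Fintype.card 𝒴 : ℝ)) := by
      rw [← Real.log_inv, inv_div]
    linarith
  calc lossR (fun _ => 1 / (Fintype.card (𝒳 × 𝒴) : ℝ)) q
      ≤ ∑ _a : 𝒳 × 𝒴, (1 / (Fintype.card (𝒳 × 𝒴) : ℝ)) * Real.log ((Fintype.card 𝒴 : ℝ) / ε) :=
        Finset.sum_le_sum fun a _ => mul_le_mul_of_nonneg_left (hterm a) (by positivity)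
    _ = Real.log ((Fintype.card 𝒴 : ℝ) / ε) := by
        rw [Finset.sum_const, Finset.card_univ, nsmul_eq_mul]
        field_simp
lemma continuousOn_lossR [Nonempty 𝒴] {ε : ℝ} (hε : 0 < ε) (w : 𝒳 × 𝒴 → ℝ) :
    ContinuousOn (lossR w) (Qset 𝒳 𝒴 ε) := by
  have hN : (0:ℝ) < Fintype.card 𝒴 := by exact_mod_cast Fintype.card_pos
  rw [continuousOn_iff_continuous_restrict]
  unfold lossR Set.domRestrict
  refine continuous_finset_sum _ fun a _ => ?_
  refine continuous_const.mul (Continuous.neg ?_)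
  have he : Continuous fun q : (Qset 𝒳 𝒴 ε) => (q : 𝒳 → 𝒴 → ℝ) a.1 a.2 :=
    (eval_continuous a.1 a.2).comp continuous_subtype_val
  refine continuous_iff_continuousAt.2 fun q₀ => ?_
  have hne : (q₀ : 𝒳 → 𝒴 → ℝ) a.1 a.2 ≠ 0 :=
    (lt_of_lt_of_le (by positivity) (q₀.2.2 a.1 a.2)).ne'
  have : Filter.Tendsto (fun q : (Qset 𝒳 𝒴 ε) => Real.log ((q : 𝒳 → 𝒴 → ℝ) a.1 a.2)) (𝓝 q₀)
      (𝓝 (Real.log ((q₀ : 𝒳 → 𝒴 → ℝ) a.1 a.2))) :=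
    (Real.continuousAt_log hne).tendsto.comp he.continuousAt
  exact this

lemma exists_eps_rule [Nonempty 𝒳] [Nonempty 𝒴] {𝒟 : Set (𝒳 × 𝒴 → ℝ)}
    (h𝒟 : ∀ p ∈ 𝒟, IsDist p) (hclosed : IsClosed 𝒟) (hconv : Convex ℝ 𝒟)
    (hne : 𝒟.Nonempty) {hstar : ℝ} (hstarU : ∀ p ∈ 𝒟, condEnt p ≤ hstar)
    {ε : ℝ} (hε : 0 < ε) (hε1 : ε < 1) :
    ∃ q ∈ Qset 𝒳 𝒴 ε, ∀ p ∈ 𝒟, lossR p q ≤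
      hstar + Real.log (1 / (1 - ε)) + ε / (1 - ε) * Real.log ((Fintype.card 𝒴 : ℝ) / ε) := by
  classical
  have hN : (0:ℝ) < Fintype.card 𝒴 := by exact_mod_cast Fintype.card_pos
  have hN1 : (1:ℝ) ≤ Fintype.card 𝒴 := by exact_mod_cast Fintype.card_pos
  have hV : (0:ℝ) < Fintype.card (𝒳 × 𝒴) := by exact_mod_cast Fintype.card_pos
  have h1e : (0:ℝ) < 1 - ε := by linarith
  have hlogNe : 0 ≤ Real.log ((Fintype.card 𝒴 : ℝ) / ε) := by
    refine Real.log_nonneg ?_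
    rw [le_div_iff₀ hε]
    linarith
  -- minimizers
  have hminAll : ∀ p' : 𝒳 × 𝒴 → ℝ, ∃ q, q ∈ Qset 𝒳 𝒴 ε ∧
      ∀ q' ∈ Qset 𝒳 𝒴 ε, lossR (wt ε p') q ≤ lossR (wt ε p') q' := by
    intro p'
    obtain ⟨q, hq, hmin⟩ := (isCompact_Qset (𝒳 := 𝒳) (𝒴 := 𝒴) ε).exists_isMinOn
      ⟨_, uniform_mem_Qset hε1.le⟩ (continuousOn_lossR hε (wt ε p'))
    exact ⟨q, hq, fun q' hq' => isMinOn_iff.mp hmin q' hq'⟩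
  choose qm hqmQ hqmMin using hminAll
  set φ : (𝒳 × 𝒴 → ℝ) → ℝ := fun p' => lossR (wt ε p') (qm p') with hφ
  -- φ is Lipschitz
  set C : ℝ := (Fintype.card (𝒳 × 𝒴) : ℝ) * Real.log ((Fintype.card 𝒴 : ℝ) / ε) with hC
  have hC0 : 0 ≤ C := mul_nonneg hV.le hlogNe
  have hdiffq : ∀ p₁ p₂ : 𝒳 × 𝒴 → ℝ, ∀ q ∈ Qset 𝒳 𝒴 ε,
      lossR (wt ε p₁) q ≤ lossR (wt ε p₂) q + C * dist p₁ p₂ := by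
    intro p₁ p₂ q hq
    have hsub : lossR (wt ε p₁) q - lossR (wt ε p₂) q
        = ∑ a : 𝒳 × 𝒴, ((1 - ε) * (p₁ a - p₂ a)) * (-Real.log (q a.1 a.2)) := by
      unfold lossR wt
      rw [← Finset.sum_sub_distrib]
      refine Finset.sum_congr rfl fun a _ => by ring
    have hbnd : ∀ a : 𝒳 × 𝒴, ((1 - ε) * (p₁ a - p₂ a)) * (-Real.log (q a.1 a.2))
        ≤ dist p₁ p₂ * Real.log ((Fintype.card 𝒴 : ℝ) / ε) := by
      intro a
      have habs : |p₁ a - p₂ a| ≤ dist p₁ p₂ := by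
        rw [← Real.dist_eq]
        exact dist_le_pi_dist p₁ p₂ a
      obtain ⟨hlo, hhi⟩ := abs_le.1 habs
      have hl0 : 0 ≤ -Real.log (q a.1 a.2) := neg_log_nonneg hq.1 a.1 a.2
      have hl1 : -Real.log (q a.1 a.2) ≤ Real.log ((Fintype.card 𝒴 : ℝ) / ε) := by
        have h1 : Real.log (ε / (Fintype.card 𝒴 : ℝ)) ≤ Real.log (q a.1 a.2) :=
          Real.log_le_log (by positivity) (hq.2 a.1 a.2)
        have h2 : Real.log ((Fintype.card 𝒴 : ℝ) / ε) = -Real.log (ε / (Fintype.card 𝒴 : ℝ)) := by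
          rw [← Real.log_inv, inv_div]
        linarith
      have hco : (1 - ε) * (p₁ a - p₂ a) ≤ dist p₁ p₂ := by nlinarith [dist_nonneg (x := p₁) (y := p₂)]
      calc ((1 - ε) * (p₁ a - p₂ a)) * (-Real.log (q a.1 a.2))
          ≤ dist p₁ p₂ * (-Real.log (q a.1 a.2)) := mul_le_mul_of_nonneg_right hco hl0
        _ ≤ dist p₁ p₂ * Real.log ((Fintype.card 𝒴 : ℝ) / ε) :=
            mul_le_mul_of_nonneg_left hl1 dist_nonneg
    have : lossR (wt ε p₁) q - lossR (wt ε p₂) q ≤ C * dist p₁ p₂ := by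
      rw [hsub]
      calc ∑ a : 𝒳 × 𝒴, ((1 - ε) * (p₁ a - p₂ a)) * (-Real.log (q a.1 a.2))
          ≤ ∑ _a : 𝒳 × 𝒴, dist p₁ p₂ * Real.log ((Fintype.card 𝒴 : ℝ) / ε) :=
            Finset.sum_le_sum fun a _ => hbnd a
        _ = C * dist p₁ p₂ := by
            rw [Finset.sum_const, Finset.card_univ, nsmul_eq_mul, hC]
            ring
    linarith
  have hφdiff : ∀ p₁ p₂ : 𝒳 × 𝒴 → ℝ, φ p₁ ≤ φ p₂ + C * dist p₁ p₂ := by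
    intro p₁ p₂
    calc φ p₁ ≤ lossR (wt ε p₁) (qm p₂) := hqmMin p₁ (qm p₂) (hqmQ p₂)
      _ ≤ lossR (wt ε p₂) (qm p₂) + C * dist p₁ p₂ := hdiffq p₁ p₂ (qm p₂) (hqmQ p₂)
      _ = φ p₂ + C * dist p₁ p₂ := rfl
  have hφlip : LipschitzWith C.toNNReal φ := by
    refine LipschitzWith.of_dist_le_mul fun p₁ p₂ => ?_
    rw [Real.dist_eq, Real.coe_toNNReal C hC0]
    have h1 := hφdiff p₁ p₂
    have h2 := hφdiff p₂ p₁
    rw [dist_comm p₂ p₁] at h2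
    rw [abs_le]
    constructor <;> linarith
  -- maximizer of φ on 𝒟
  obtain ⟨p₀, hp₀, hmax'⟩ := (isCompact_dist h𝒟 hclosed).exists_isMaxOn hne
    hφlip.continuous.continuousOn
  have hmax : ∀ p ∈ 𝒟, φ p ≤ φ p₀ := fun p hp => hmax' hp
  set μ : ℝ := φ p₀ with hμdef
  have hwpos : ∀ p ∈ 𝒟, ∀ a : 𝒳 × 𝒴, 0 < wt ε p a := by
    intro p hp a
    unfold wt
    have := (h𝒟 p hp).1 a
    have h2 : 0 < ε * (1 / (Fintype.card (𝒳 × 𝒴) : ℝ)) := by positivity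
    nlinarith
  refine ⟨qm p₀, hqmQ p₀, fun p hp => ?_⟩
  -- step 1: lossR (wt ε p) (qm p₀) ≤ μ
  have hstep1 : lossR (wt ε p) (qm p₀) ≤ μ := by
    set t : ℕ → ℝ := fun n => 1 / ((n : ℝ) + 2) with htdef
    have ht0 : ∀ n, 0 < t n := fun n => by positivity
    have ht1 : ∀ n, t n < 1 := fun n => by
      rw [htdef]
      rw [div_lt_one (by positivity)]
      have : (0:ℝ) ≤ (n:ℝ) := Nat.cast_nonneg n
      linarith
    have htt : Filter.Tendsto t Filter.atTop (𝓝 0) := by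
      have h2 := (tendsto_one_div_add_atTop_nhds_zero_nat (𝕜 := ℝ)).comp (Filter.tendsto_add_atTop_nat 1)
      have heq : t = (fun n : ℕ => 1 / ((n : ℝ) + 1)) ∘ (fun a : ℕ => a + 1) := by
        funext n
        simp only [htdef, Function.comp_apply]
        push_cast
        ring_nf
      rw [heq]
      exact h2
    set pn : ℕ → 𝒳 × 𝒴 → ℝ := fun n => (1 - t n) • p₀ + t n • p with hpndef
    have hpn : ∀ n, pn n ∈ 𝒟 := fun n =>
      hconv hp₀ hp (by linarith [ht1 n]) (ht0 n).le (by ring)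
    have hpnc : ∀ n a, pn n a = (1 - t n) * p₀ a + t n * p a := fun n a => rfl
    set qn : ℕ → 𝒳 → 𝒴 → ℝ := fun n => qm (pn n) with hqndef
    have hwt_comb : ∀ n (q : 𝒳 → 𝒴 → ℝ), lossR (wt ε (pn n)) q
        = (1 - t n) * lossR (wt ε p₀) q + t n * lossR (wt ε p) q := by
      intro n q
      have hwteq : wt ε (pn n) = fun a => (1 - t n) * wt ε p₀ a + t n * wt ε p a := by
        funext a
        simp only [wt, hpnc]
        ring
      rw [hwteq, lossR_comb]
    have hφpn : ∀ n, φ (pn n)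
        = (1 - t n) * lossR (wt ε p₀) (qn n) + t n * lossR (wt ε p) (qn n) := fun n =>
      hwt_comb n (qn n)
    have hlow : ∀ n, μ ≤ lossR (wt ε p₀) (qn n) := fun n => hqmMin p₀ (qn n) (hqmQ (pn n))
    have hkey : ∀ n, lossR (wt ε p) (qn n) ≤ μ := by
      intro n
      have h1 : φ (pn n) ≤ μ := hmax _ (hpn n)
      rw [hφpn n] at h1
      have h3 := hlow n
      nlinarith [ht0 n, ht1 n]
    have hLpn0 : ∀ n, 0 ≤ lossR (wt ε p) (qn n) := fun n =>
      lossR_nonneg (fun a => (hwpos p hp a).le) (hqmQ (pn n)).1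
    have hup : ∀ n, lossR (wt ε p₀) (qn n) ≤ μ / (1 - t n) := by
      intro n
      have h1 : φ (pn n) ≤ μ := hmax _ (hpn n)
      rw [hφpn n] at h1
      rw [le_div_iff₀ (by linarith [ht1 n])]
      nlinarith [hLpn0 n, ht0 n]
    have hsq : Filter.Tendsto (fun n => lossR (wt ε p₀) (qn n)) Filter.atTop (𝓝 μ) := by
      refine tendsto_of_tendsto_of_tendsto_of_le_of_le tendsto_const_nhds ?_ hlow hup
      have : Filter.Tendsto (fun n => μ / (1 - t n)) Filter.atTop (𝓝 (μ / (1 - 0))) :=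
        tendsto_const_nhds.div (tendsto_const_nhds.sub htt) (by norm_num)
      simpa using this
    obtain ⟨qL, hqL, σ, hσm, hσt⟩ := (isCompact_Qset (𝒳 := 𝒳) (𝒴 := 𝒴) ε).tendsto_subseq
      (fun n => hqmQ (pn n))
    have hcoord : ∀ a : 𝒳 × 𝒴,
        Filter.Tendsto (fun n => qn (σ n) a.1 a.2) Filter.atTop (𝓝 (qL a.1 a.2)) := fun a =>
      tendsto_pi_nhds.1 (tendsto_pi_nhds.1 hσt a.1) a.2
    have hqLpos : ∀ x y, 0 < qL x y := fun x y =>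
      lt_of_lt_of_le (by positivity) (hqL.2 x y)
    have hL1 : Filter.Tendsto (fun n => lossR (wt ε p₀) (qn (σ n))) Filter.atTop
        (𝓝 (lossR (wt ε p₀) qL)) :=
      lossR_tendsto hcoord (fun a _ => hqLpos a.1 a.2)
    have heqμ : lossR (wt ε p₀) qL = μ :=
      tendsto_nhds_unique hL1 (hsq.comp hσm.tendsto_atTop)
    have hqLmin : qL = qm p₀ := by
      refine min_unique hε (hwpos p₀ hp₀) hqL (hqmQ p₀) ?_ (hqmMin p₀)
      intro q hq
      rw [heqμ]
      exact hqmMin p₀ q hq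
    have hL2 : Filter.Tendsto (fun n => lossR (wt ε p) (qn (σ n))) Filter.atTop
        (𝓝 (lossR (wt ε p) qL)) :=
      lossR_tendsto hcoord (fun a _ => hqLpos a.1 a.2)
    have hfin : lossR (wt ε p) qL ≤ μ :=
      le_of_tendsto hL2 (Filter.Eventually.of_forall fun n => hkey (σ n))
    rwa [hqLmin] at hfin
  -- step 2: bound μ
  set qsp : 𝒳 → 𝒴 → ℝ := fun x y => (1 - ε) * condOf p₀ x y + ε * (1 / (Fintype.card 𝒴 : ℝ))
    with hqspdef
  have hcondp₀ := isCond_condOf (𝒳 := 𝒳) (𝒴 := 𝒴) (h𝒟 p₀ hp₀).1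
  have hqspQ : qsp ∈ Qset 𝒳 𝒴 ε := by
    refine ⟨⟨fun x y => ?_, fun x => ?_⟩, fun x y => ?_⟩
    · have := hcondp₀.1 x y
      have h2 : (0:ℝ) ≤ ε * (1 / (Fintype.card 𝒴 : ℝ)) := by positivity
      simp only [hqspdef]
      nlinarith
    · simp only [hqspdef, Finset.sum_add_distrib, ← Finset.mul_sum, hcondp₀.2 x]
      rw [Finset.sum_const, Finset.card_univ, nsmul_eq_mul]
      field_simp
      ring
    · have := hcondp₀.1 x y
      simp only [hqspdef]
      rw [div_eq_mul_one_div ε]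
      nlinarith
  have hμb : μ ≤ (1 - ε) * (hstar + Real.log (1 / (1 - ε)))
      + ε * Real.log ((Fintype.card 𝒴 : ℝ) / ε) := by
    have h1 : μ ≤ lossR (wt ε p₀) qsp := hqmMin p₀ qsp hqspQ
    have hwteq : wt ε p₀ = fun a => (1 - ε) * p₀ a
        + ε * ((fun _ : 𝒳 × 𝒴 => 1 / (Fintype.card (𝒳 × 𝒴) : ℝ)) a) := rfl
    have h2 : lossR (wt ε p₀) qsp = (1 - ε) * lossR p₀ qsp
        + ε * lossR (fun _ => 1 / (Fintype.card (𝒳 × 𝒴) : ℝ)) qsp := by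
      rw [hwteq, lossR_comb]
    have h3 : lossR p₀ qsp ≤ condEnt p₀ + Real.log (1 / (1 - ε)) :=
      gibbs_bound hε hε1 (h𝒟 p₀ hp₀)
    have h4 : lossR (fun _ => 1 / (Fintype.card (𝒳 × 𝒴) : ℝ)) qsp
        ≤ Real.log ((Fintype.card 𝒴 : ℝ) / ε) := lossR_unif_le hε hqspQ
    have h5 : condEnt p₀ ≤ hstar := hstarU p₀ hp₀
    nlinarith
  -- step 3: combine
  have hsplit : lossR (wt ε p) (qm p₀) = (1 - ε) * lossR p (qm p₀)
      + ε * lossR (fun _ => 1 / (Fintype.card (𝒳 × 𝒴) : ℝ)) (qm p₀) := by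
    rw [show wt ε p = fun a => (1 - ε) * p a
      + ε * ((fun _ : 𝒳 × 𝒴 => 1 / (Fintype.card (𝒳 × 𝒴) : ℝ)) a) from rfl, lossR_comb]
  have hvnn : 0 ≤ lossR (fun _ : 𝒳 × 𝒴 => 1 / (Fintype.card (𝒳 × 𝒴) : ℝ)) (qm p₀) :=
    lossR_nonneg (fun a => by positivity) (hqmQ p₀).1
  have hmain : (1 - ε) * lossR p (qm p₀) ≤ (1 - ε) * (hstar + Real.log (1 / (1 - ε)))
      + ε * Real.log ((Fintype.card 𝒴 : ℝ) / ε) := by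
    rw [hsplit] at hstep1
    nlinarith
  rw [← mul_le_mul_iff_right₀ h1e]
  calc (1 - ε) * lossR p (qm p₀)
      ≤ (1 - ε) * (hstar + Real.log (1 / (1 - ε)))
        + ε * Real.log ((Fintype.card 𝒴 : ℝ) / ε) := hmain
    _ = (1 - ε) * (hstar + Real.log (1 / (1 - ε))
        + ε / (1 - ε) * Real.log ((Fintype.card 𝒴 : ℝ) / ε)) := by
        field_simp

end Aux

end RobustAux

open RobustAux Filter Topology in
theorem exists_simultaneous_robust_rule [Fintype 𝒳] [Fintype 𝒴]
    (𝒟 : Set (𝒳 × 𝒴 → ℝ)) (h𝒟 : ∀ p ∈ 𝒟, IsDist p)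
    (hclosed : IsClosed 𝒟) (hconv : Convex ℝ 𝒟) (hne : 𝒟.Nonempty) :
    ∃ q : 𝒳 → 𝒴 → ℝ, IsCond q ∧
      ∀ p ∈ 𝒟, CEE p q ≤ ⨆ p' : 𝒟, ((condEnt p'.1 : ℝ) : EReal) := by
  classical
  rcases isEmpty_or_nonempty (𝒳 × 𝒴) with hE | hNE
  · obtain ⟨p, hp⟩ := hne
    have h1 := (h𝒟 p hp).2
    rw [Finset.univ_eq_empty, Finset.sum_empty] at h1
    exact absurd h1 (by norm_num)
  obtain ⟨a₀⟩ := hNE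
  haveI h𝒳 : Nonempty 𝒳 := ⟨a₀.1⟩
  haveI h𝒴 : Nonempty 𝒴 := ⟨a₀.2⟩
  have hN : (0:ℝ) < Fintype.card 𝒴 := by exact_mod_cast Fintype.card_pos
  obtain ⟨ps, hps, hmaxEnt⟩ := exists_max_condEnt h𝒟 hclosed hne
  set hstar : ℝ := condEnt ps with hstardef
  -- the vanishing sequence
  set t : ℕ → ℝ := fun n => 1 / ((n : ℝ) + 2) with htdef
  have ht0 : ∀ n, 0 < t n := fun n => by positivity
  have ht1 : ∀ n, t n < 1 := fun n => by
    rw [htdef, div_lt_one (by positivity)]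
    have : (0:ℝ) ≤ (n:ℝ) := Nat.cast_nonneg n
    linarith
  have htt : Tendsto t atTop (𝓝 0) := by
    have h2 := (tendsto_one_div_add_atTop_nhds_zero_nat (𝕜 := ℝ)).comp (Filter.tendsto_add_atTop_nat 1)
    have heq : t = (fun n : ℕ => 1 / ((n : ℝ) + 1)) ∘ (fun a : ℕ => a + 1) := by
      funext n
      simp only [htdef, Function.comp_apply]
      push_cast
      ring_nf
    rw [heq]
    exact h2
  set γ : ℕ → ℝ := fun n => hstar + Real.log (1 / (1 - t n))
    + t n / (1 - t n) * Real.log ((Fintype.card 𝒴 : ℝ) / t n) with hγdef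
  have hstep : ∀ n : ℕ, ∃ q, q ∈ Qset 𝒳 𝒴 (t n) ∧ ∀ p ∈ 𝒟, lossR p q ≤ γ n := by
    intro n
    obtain ⟨q, hq, hb⟩ := exists_eps_rule h𝒟 hclosed hconv hne
      (fun p hp => hmaxEnt p hp) (ht0 n) (ht1 n)
    exact ⟨q, hq, hb⟩
  choose qn hqnQ hqnB using hstep
  -- limit of γ
  have h1t : Tendsto (fun n => 1 - t n) atTop (𝓝 1) := by
    simpa using tendsto_const_nhds.sub htt
  have hlog1 : Tendsto (fun n => Real.log (1 / (1 - t n))) atTop (𝓝 0) := by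
    have heq : (fun n => Real.log (1 / (1 - t n))) = fun n => -Real.log (1 - t n) := by
      funext n
      rw [one_div, Real.log_inv]
    rw [heq]
    have := ((Real.continuousAt_log one_ne_zero).tendsto.comp h1t).neg
    simpa [Real.log_one] using this
  have h2a : Tendsto (fun n => t n * Real.log (t n)) atTop (𝓝 0) := by
    have h := ((Real.continuous_negMulLog.tendsto 0).comp htt).neg
    have heq : (fun n => -Real.negMulLog (t n)) = fun n => t n * Real.log (t n) := by
      funext n
      rw [Real.negMulLog_def]
      ring
    rw [← heq]
    simpa [Real.negMulLog_def] using h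
  have h2b : Tendsto (fun n => t n * Real.log (Fintype.card 𝒴 : ℝ)) atTop (𝓝 0) := by
    have h := htt.mul_const (Real.log (Fintype.card 𝒴 : ℝ))
    rw [zero_mul] at h
    exact h
  have hinv : Tendsto (fun n => (1 - t n)⁻¹) atTop (𝓝 1) := by
    simpa using h1t.inv₀ one_ne_zero
  have hterm2 : Tendsto (fun n => t n / (1 - t n)
      * Real.log ((Fintype.card 𝒴 : ℝ) / t n)) atTop (𝓝 0) := by
    have heq : (fun n => t n / (1 - t n) * Real.log ((Fintype.card 𝒴 : ℝ) / t n))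
        = fun n => (1 - t n)⁻¹ * (t n * Real.log (Fintype.card 𝒴 : ℝ) - t n * Real.log (t n)) := by
      funext n
      rw [Real.log_div hN.ne' (ht0 n).ne']
      field_simp
    rw [heq]
    have := hinv.mul (h2b.sub h2a)
    simpa using this
  have hγt : Tendsto γ atTop (𝓝 hstar) := by
    have h := ((tendsto_const_nhds (x := hstar) (f := atTop)).add hlog1).add hterm2
    rw [add_zero, add_zero] at h
    exact h
  -- subsequence of the qₙ
  have hqnC : ∀ n, qn n ∈ Qset 𝒳 𝒴 0 := by
    intro n
    refine ⟨(hqnQ n).1, fun x y => ?_⟩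
    rw [zero_div]
    exact (hqnQ n).1.1 x y
  obtain ⟨qL, hqL, σ, hσm, hσt⟩ := (isCompact_Qset (𝒳 := 𝒳) (𝒴 := 𝒴) 0).tendsto_subseq hqnC
  have hcoord : ∀ a : 𝒳 × 𝒴,
      Tendsto (fun n => qn (σ n) a.1 a.2) atTop (𝓝 (qL a.1 a.2)) := fun a =>
    tendsto_pi_nhds.1 (tendsto_pi_nhds.1 hσt a.1) a.2
  have hγσ : Tendsto (fun n => γ (σ n)) atTop (𝓝 hstar) := hγt.comp hσm.tendsto_atTop
  refine ⟨qL, hqL.1, fun p hp => ?_⟩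
  -- positivity of qL on the support of p
  have hpos : ∀ a : 𝒳 × 𝒴, p a ≠ 0 → 0 < qL a.1 a.2 := by
    intro a ha
    have hpa : 0 < p a := lt_of_le_of_ne ((h𝒟 p hp).1 a) (Ne.symm ha)
    have hqn_lb : ∀ n, Real.exp (-γ (σ n) / p a) ≤ qn (σ n) a.1 a.2 := by
      intro n
      have hq := hqnB (σ n) p hp
      have hterm : p a * (-Real.log (qn (σ n) a.1 a.2)) ≤ lossR p (qn (σ n)) := by
        refine Finset.single_le_sum (f := fun a : 𝒳 × 𝒴 => p a * (-Real.log (qn (σ n) a.1 a.2)))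
          (fun i _ => mul_nonneg ((h𝒟 p hp).1 i) (neg_log_nonneg (hqnQ (σ n)).1 i.1 i.2))
          (Finset.mem_univ a)
      have hqpos : 0 < qn (σ n) a.1 a.2 := by
        refine lt_of_lt_of_le ?_ ((hqnQ (σ n)).2 a.1 a.2)
        have := ht0 (σ n)
        positivity
      have hql : -γ (σ n) / p a ≤ Real.log (qn (σ n) a.1 a.2) := by
        rw [div_le_iff₀ hpa]
        nlinarith
      calc Real.exp (-γ (σ n) / p a) ≤ Real.exp (Real.log (qn (σ n) a.1 a.2)) :=
            Real.exp_le_exp.2 hql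
        _ = qn (σ n) a.1 a.2 := Real.exp_log hqpos
    have hlim1 : Tendsto (fun n => Real.exp (-γ (σ n) / p a)) atTop
        (𝓝 (Real.exp (-hstar / p a))) := by
      refine (Real.continuous_exp.tendsto _).comp ?_
      exact hγσ.neg.div_const (p a)
    have hfin : Real.exp (-hstar / p a) ≤ qL a.1 a.2 :=
      le_of_tendsto_of_tendsto' hlim1 (hcoord a) hqn_lb
    exact lt_of_lt_of_le (Real.exp_pos _) hfin
  have hLt : Tendsto (fun n => lossR p (qn (σ n))) atTop (𝓝 (lossR p qL)) :=
    lossR_tendsto hcoord hpos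
  have hle : lossR p qL ≤ hstar :=
    le_of_tendsto_of_tendsto' hLt hγσ (fun n => hqnB (σ n) p hp)
  rw [CEE_eq_coe (h𝒟 p hp).1 (fun a hpa => (hpos a hpa.ne').ne')]
  calc ((lossR p qL : ℝ) : EReal) ≤ ((hstar : ℝ) : EReal) := EReal.coe_le_coe_iff.2 hle
    _ ≤ ⨆ p' : 𝒟, ((condEnt p'.1 : ℝ) : EReal) :=
      le_iSup (fun p' : 𝒟 => ((condEnt p'.1 : ℝ) : EReal)) ⟨ps, hps⟩
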